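/- Let g = [[a,b],[c,d]] ∈ SL(2,ℂ). Then g can be written as a product p⁺ · k · n, where p⁺ = [[1,x],[0,1]] for some x ∈ ℂ, k = [[γ,0],[0,γ⁻¹]] for some γ ∈ ℂ×, and n = [[1+is, -is],[is, 1-is]] for some s ∈ ℂ, if and only if c + d ≠ 0. In that case γ = 1/(c+d) and s = -ic/(c+d). -/

import Mathlib

open Matrix

noncomputable def pplus (x : ℂ) : Matrix (Fin 2) (Fin 2) ℂ := !![1, x; 0, 1]

noncomputable def kmat (γ : ℂ) : Matrix (Fin 2) (Fin 2) ℂ := !![γ, 0; 0, γ⁻¹]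

noncomputable def nmat (s : ℂ) : Matrix (Fin 2) (Fin 2) ℂ :=
  !![1 + Complex.I * s, -(Complex.I * s); Complex.I * s, 1 - Complex.I * s]

lemma pkn_eq (x γ s : ℂ) : pplus x * kmat γ * nmat s =
    !![γ*(1+Complex.I*s)+x*γ⁻¹*(Complex.I*s), γ*(-(Complex.I*s))+x*γ⁻¹*(1-Complex.I*s);
       γ⁻¹*(Complex.I*s), γ⁻¹*(1-Complex.I*s)] := by
  ext i j
  fin_cases i <;> fin_cases j <;>
    simp [pplus, kmat, nmat, Matrix.mul_apply, Fin.sum_univ_two]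

theorem sl2_pkn_decomposition (g : Matrix (Fin 2) (Fin 2) ℂ) (hdet : g.det = 1) :
    ((∃ x γ s : ℂ, γ ≠ 0 ∧ g = pplus x * kmat γ * nmat s) ↔ g 1 0 + g 1 1 ≠ 0) ∧
    (∀ x γ s : ℂ, γ ≠ 0 → g = pplus x * kmat γ * nmat s →
      γ = (g 1 0 + g 1 1)⁻¹ ∧ s = -Complex.I * g 1 0 / (g 1 0 + g 1 1)) := by
  rw [Matrix.det_fin_two] at hdet
  have key : ∀ x γ s : ℂ, γ ≠ 0 → g = pplus x * kmat γ * nmat s →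
      g 1 0 + g 1 1 = γ⁻¹ ∧ g 1 0 = γ⁻¹ * (Complex.I * s) := by
    intro x γ s hγ hg
    rw [pkn_eq] at hg
    have h10 : g 1 0 = γ⁻¹*(Complex.I*s) := by rw [hg]; simp
    have h11 : g 1 1 = γ⁻¹*(1-Complex.I*s) := by rw [hg]; simp
    exact ⟨by rw [h10, h11]; ring, h10⟩
  constructor
  · constructor
    · rintro ⟨x, γ, s, hγ, hg⟩
      rw [(key x γ s hγ hg).1]
      exact inv_ne_zero hγ
    · intro h
      set a := g 0 0; set b := g 0 1; set c := g 1 0; set d := g 1 1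
      refine ⟨(a+b-(c+d)⁻¹)/(c+d), (c+d)⁻¹, -Complex.I*c/(c+d), inv_ne_zero h, ?_⟩
      rw [pkn_eq]
      have hIs : Complex.I * (-Complex.I*c/(c+d)) = c/(c+d) := by
        have h2 : Complex.I * (-Complex.I*c/(c+d)) = -(Complex.I*Complex.I)*(c/(c+d)) := by ring
        rw [h2, Complex.I_mul_I]; ring
      rw [hIs, inv_inv]
      ext i j
      fin_cases i <;> fin_cases j <;>
        simp only [Matrix.cons_val', Matrix.cons_val_zero, Matrix.cons_val_one,
          Matrix.head_cons, Matrix.head_fin_const, Matrix.empty_val', Matrix.cons_val_fin_one,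
          Matrix.of_apply, Fin.zero_eta, Fin.mk_one, show g 0 0 = a from rfl,
          show g 0 1 = b from rfl, show g 1 0 = c from rfl, show g 1 1 = d from rfl]
      · field_simp
        linear_combination (c+d) * hdet
      · field_simp
        linear_combination (-(c+d)) * hdet
      · field_simp
      · field_simp
        ring
  · intro x γ s hγ hg
    obtain ⟨h1, h2⟩ := key x γ s hγ hg
    have hγinv : γ = (g 1 0 + g 1 1)⁻¹ := by rw [h1, inv_inv]
    refine ⟨hγinv, ?_⟩
    rw [← h1] at h2
    have hsum : g 1 0 + g 1 1 ≠ 0 := h1 ▸ inv_ne_zero hγ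
    rw [eq_div_iff hsum]
    linear_combination Complex.I * h2 + s * (g 1 0 + g 1 1) * Complex.I_sq
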